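/- Let φ : [0,1] → ℝ be differentiable with φ' Lipschitz continuous. Then for every n ≥ 1, k ≥ 1 and every probability vector P = (p_1,…,p_k), if N = (N_1,…,N_k) ~ Multinomial(n, P), then |E[Σ_{i=1}^k φ(N_i/n)] − Σ_{i=1}^k φ(p_i)| ≤ ‖φ'‖_{C^{0,1}}/(2n). -/

import Mathlib

open scoped BigOperators ENNReal
open MeasureTheory

noncomputable section

/-- `φ` has `ℓ`th divergence speed `p^α`: `φ ∈ C^ℓ` and there are constants
`W > 0`, `c, c' ≥ 0` with `W p^{α-ℓ} - c' ≤ |φ^{(ℓ)}(p)| ≤ W p^{α-ℓ} + c` on `(0,1)`. -/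
def HasDivergenceSpeed (ℓ : ℕ) (α : ℝ) (φ : ℝ → ℝ) : Prop :=
  ContDiff ℝ ℓ φ ∧
  ∃ W c c' : ℝ, 0 < W ∧ 0 ≤ c ∧ 0 ≤ c' ∧
    ∀ p ∈ Set.Ioo (0:ℝ) 1,
      W * p ^ (α - (ℓ : ℝ)) - c' ≤ |iteratedDeriv ℓ φ p| ∧
      |iteratedDeriv ℓ φ p| ≤ W * p ^ (α - (ℓ : ℝ)) + c

/-- Multinomial probability of the histogram `N` for `n` samples from `P`. -/
def mWeight (n : ℕ) {k : ℕ} (P : Fin k → ℝ) (N : Fin k → ℕ) : ℝ :=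
  if (∑ i, N i) = n then
    (n.factorial : ℝ) / (∏ i, ((N i).factorial : ℝ)) * ∏ i, P i ^ (N i)
  else 0

/-- Expectation of `f(N)` for `N ~ Multinomial(n, P)`. -/
def mExp (n : ℕ) {k : ℕ} (P : Fin k → ℝ) (f : (Fin k → ℕ) → ℝ) : ℝ :=
  ∑' N : Fin k → ℕ, mWeight n P N * f N

/-- Variance of `f(N)` for `N ~ Multinomial(n, P)`. -/
def mVar (n : ℕ) {k : ℕ} (P : Fin k → ℝ) (f : (Fin k → ℕ) → ℝ) : ℝ :=
  mExp n P fun N => (f N - mExp n P f) ^ 2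

/-- The probability simplex `M_k`. -/
def probVec (k : ℕ) : Set (Fin k → ℝ) := {P | (∀ i, 0 ≤ P i) ∧ ∑ i, P i = 1}

/-- The minimax quadratic risk `R*(n, k; φ)` for estimating `θ(P) = ∑ i, φ (p i)`
from a multinomial histogram. -/
def minimaxRisk (n k : ℕ) (φ : ℝ → ℝ) : ℝ :=
  ⨅ est : (Fin k → ℕ) → ℝ, ⨆ P : probVec k,
    mExp n P.1 fun N => (est N - ∑ i, φ (P.1 i)) ^ 2

/-- Poisson probability mass function with mean `μ`. -/
def poissonP (μ : ℝ) (m : ℕ) : ℝ := Real.exp (-μ) * μ ^ m / (m.factorial : ℝ)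

/-- Expectation of `g(Ñ)` for `Ñ ~ Poisson(μ)`. -/
def poisExp (μ : ℝ) (g : ℕ → ℝ) : ℝ := ∑' m : ℕ, poissonP μ m * g m

/-- Variance of `g(Ñ)` for `Ñ ~ Poisson(μ)`. -/
def poisVar (μ : ℝ) (g : ℕ → ℝ) : ℝ := ∑' m : ℕ, poissonP μ m * (g m - poisExp μ g) ^ 2

/-- Expectation (in `ℝ≥0∞`) of a nonnegative `f(Ñ)` where `Ñ` has independent
coordinates `Ñ i ~ Poisson(μ i)`. -/
def pExp {k : ℕ} (μ : Fin k → ℝ) (f : (Fin k → ℕ) → ℝ) : ℝ≥0∞ :=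
  ∑' N : Fin k → ℕ, ENNReal.ofReal ((∏ i, poissonP (μ i) (N i)) * f N)

/-- The Poissonized minimax risk `R̃*(m, k; φ)`. -/
def poissonRisk (m : ℝ) (k : ℕ) (φ : ℝ → ℝ) : ℝ≥0∞ :=
  ⨅ est : (Fin k → ℕ) → ℝ, ⨆ P : probVec k,
    pExp (fun i => m * P.1 i) (fun N => (est N - ∑ i, φ (P.1 i)) ^ 2)

/-- The approximate probability vectors `M_k(ε)`. -/
def approxProbVec (k : ℕ) (ε : ℝ) : Set (Fin k → ℝ) :=
  {P | (∀ i, 0 ≤ P i) ∧ |(∑ i, P i) - 1| ≤ ε}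

/-- The approximated Poissonized minimax risk `R̃*(m, k, ε; φ)`. -/
def approxPoissonRisk (m : ℝ) (k : ℕ) (ε : ℝ) (φ : ℝ → ℝ) : ℝ≥0∞ :=
  ⨅ est : (Fin k → ℕ) → ℝ, ⨆ P : approxProbVec k ε,
    pExp (fun i => m * P.1 i) (fun N => (est N - ∑ i, φ (P.1 i)) ^ 2)

/-- The Hölder norm `‖f‖_{C^{0,β}}` of `f` on `[0,1]` (as an infimum of admissible
Hölder constants). -/
def holderNorm (β : ℝ) (f : ℝ → ℝ) : ℝ :=
  sInf {K : ℝ | 0 ≤ K ∧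
    ∀ x ∈ Set.Icc (0:ℝ) 1, ∀ y ∈ Set.Icc (0:ℝ) 1, |f x - f y| ≤ K * |x - y| ^ β}

/-- The best uniform approximation error `E_L(f, [a,b])` by polynomials of degree `≤ L`. -/
def bestPolyError (L : ℕ) (f : ℝ → ℝ) (a b : ℝ) : ℝ :=
  sInf {e : ℝ | ∃ g : Polynomial ℝ, g.natDegree ≤ L ∧
    e = sSup ((fun x => |f x - g.eval x|) '' Set.Icc a b)}

/-- Bernstein basis polynomial `B_{ν,n}(x)`. -/
def bernB (ν n : ℕ) (x : ℝ) : ℝ := (n.choose ν : ℝ) * x ^ ν * (1 - x) ^ (n - ν)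

/-- The generalized Hermite interpolation `H_L(p; φ, a, b)`. -/
def hermiteInterp (L : ℕ) (φ : ℝ → ℝ) (a b p : ℝ) : ℝ :=
  φ a + ∑ m ∈ Finset.Icc 1 L,
    (iteratedDeriv m φ a / (m.factorial : ℝ)) * (p - a) ^ m *
      ∑ s ∈ Finset.range (L - m + 1),
        ((L + 1 : ℝ) / (L + s + 1 : ℝ)) * bernB s (L + s + 1) ((p - a) / (b - a))

/-- The smoothed function `H_{L,Δ}[φ]`. -/
def HSmooth (L : ℕ) (Δ : ℝ) (φ : ℝ → ℝ) (p : ℝ) : ℝ :=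
  if p ≤ Δ / 2 then hermiteInterp L φ Δ (Δ / 2) (Δ / 2)
  else if p < Δ then hermiteInterp L φ Δ (Δ / 2) p
  else if p ≤ 1 then φ p
  else if p < 2 then hermiteInterp L φ 1 2 p
  else hermiteInterp L φ 1 2 2

/-- The fourth-order bias-corrected function `φ̄_{4,Δ}`. -/
def phiBar4 (n : ℕ) (Δ : ℝ) (φ : ℝ → ℝ) (p : ℝ) : ℝ :=
  HSmooth 6 Δ φ p
    - p / (2 * (n : ℝ)) * iteratedDeriv 2 (HSmooth 6 Δ φ) p
    - 2 * p / (3 * (n : ℝ) ^ 2) * iteratedDeriv 3 (HSmooth 6 Δ φ) p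
    - 7 * p / (24 * (n : ℝ) ^ 3) * iteratedDeriv 4 (HSmooth 6 Δ φ) p
    - 3 * p ^ 2 / (8 * (n : ℝ) ^ 2) * iteratedDeriv 4 (HSmooth 6 Δ φ) p

/-- First-order modulus of smoothness of `f` on `[-1,1]`. -/
def modulus1 (f : ℝ → ℝ) (t : ℝ) : ℝ :=
  sSup {d : ℝ | ∃ x ∈ Set.Icc (-1:ℝ) 1, ∃ y ∈ Set.Icc (-1:ℝ) 1, |x - y| ≤ t ∧ d = |f x - f y|}

/-- Second-order modulus of smoothness of `f` on `[0,1]`. -/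
def modulus2 (f : ℝ → ℝ) (t : ℝ) : ℝ :=
  sSup {d : ℝ | ∃ x ∈ Set.Icc (0:ℝ) 1, ∃ y ∈ Set.Icc (0:ℝ) 1,
    |x - y| ≤ 2 * t ∧ d = |f x + f y - 2 * f ((x + y) / 2)|}

section Helpers
open Finset
theorem mult_succ (k : ℕ) (j : Fin k) (M : Fin k → ℕ) :
    (M j + 1) * Nat.multinomial Finset.univ (Function.update M j (M j + 1))
      = ((∑ i, M i) + 1) * Nat.multinomial Finset.univ M := by
  have hp : 0 < ∏ i, (M i).factorial := Finset.prod_pos fun i _ => (M i).factorial_pos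
  apply Nat.eq_of_mul_eq_mul_left hp
  have h1 := Nat.multinomial_spec (Finset.univ : Finset (Fin k)) (Function.update M j (M j + 1))
  have h2 := Nat.multinomial_spec (Finset.univ : Finset (Fin k)) M
  have hsum : ∑ i, Function.update M j (M j + 1) i = (∑ i, M i) + 1 := by
    rw [Finset.sum_update_of_mem (Finset.mem_univ j), Finset.sdiff_singleton_eq_erase,
      ← Finset.sum_erase_add _ _ (Finset.mem_univ j)]
    omega
  have hprod : ∏ i, (Function.update M j (M j + 1) i).factorial
      = (M j + 1) * ∏ i, (M i).factorial := by
    have : (fun i => (Function.update M j (M j + 1) i).factorial)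
        = Function.update (fun i => (M i).factorial) j (M j + 1).factorial := by
      funext i
      rcases eq_or_ne i j with rfl | h
      · simp
      · simp [Function.update_of_ne h]
    rw [this, Finset.prod_update_of_mem (Finset.mem_univ j), Finset.sdiff_singleton_eq_erase,
      Nat.factorial_succ, ← Finset.prod_erase_mul _ _ (Finset.mem_univ j)]
    ring
  rw [hsum] at h1
  calc (∏ i, (M i).factorial) * ((M j + 1) * Nat.multinomial Finset.univ (Function.update M j (M j + 1)))
      = (∏ i, (Function.update M j (M j + 1) i).factorial) * Nat.multinomial Finset.univ (Function.update M j (M j + 1)) := by rw [hprod]; ring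
    _ = ((∑ i, M i) + 1).factorial := h1
    _ = ((∑ i, M i) + 1) * (∑ i, M i).factorial := Nat.factorial_succ _
    _ = ((∑ i, M i) + 1) * ((∏ i, (M i).factorial) * Nat.multinomial Finset.univ M) := by rw [h2]
    _ = (∏ i, (M i).factorial) * (((∑ i, M i) + 1) * Nat.multinomial Finset.univ M) := by ring

theorem master (k : ℕ) (P : Fin k → ℝ) (j : Fin k) (n : ℕ) (F : ℕ → ℝ) :
    ∑ N ∈ piAntidiag (univ : Finset (Fin k)) (n+1),
      (Nat.multinomial univ N : ℝ) * (∏ i, P i ^ N i) * ((N j : ℝ) * F (N j))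
    = ((n:ℝ)+1) * P j * ∑ M ∈ piAntidiag (univ : Finset (Fin k)) n,
        (Nat.multinomial univ M : ℝ) * (∏ i, P i ^ M i) * F (M j + 1) := by
  classical
  rw [Finset.mul_sum]
  rw [← Finset.sum_filter_of_ne
    (p := fun N : Fin k → ℕ => N j ≠ 0)
    (fun N _ h => by
      intro hj0
      exact h (by simp [hj0]))]
  refine Finset.sum_nbij' (fun N => Function.update N j (N j - 1))
    (fun M => Function.update M j (M j + 1)) ?_ ?_ ?_ ?_ ?_
  · -- filter → piAntidiag n
    intro N hN
    simp only [Finset.mem_filter, mem_piAntidiag, mem_univ, implies_true, and_true] at hN ⊢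
    obtain ⟨hs, hj0⟩ := hN
    rw [Finset.sum_update_of_mem (Finset.mem_univ j), Finset.sdiff_singleton_eq_erase]
    rw [← Finset.sum_erase_add _ _ (Finset.mem_univ j)] at hs
    omega
  · -- piAntidiag n → filter
    intro M hM
    simp only [Finset.mem_filter, mem_piAntidiag, mem_univ, implies_true, and_true] at hM ⊢
    constructor
    · rw [Finset.sum_update_of_mem (Finset.mem_univ j), Finset.sdiff_singleton_eq_erase]
      rw [← Finset.sum_erase_add _ _ (Finset.mem_univ j)] at hM
      omega
    · simp
  · intro N hN
    simp only [Finset.mem_filter] at hN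
    funext i
    rcases eq_or_ne i j with rfl | h
    · simp only [Function.update_self]
      omega
    · simp [Function.update_of_ne h]
  · intro M _
    funext i
    rcases eq_or_ne i j with rfl | h
    · simp
    · simp [Function.update_of_ne h]
  · -- term equality
    intro N hN
    simp only [Finset.mem_filter, mem_piAntidiag, mem_univ, implies_true, and_true] at hN
    obtain ⟨hs, hj0⟩ := hN
    set M : Fin k → ℕ := Function.update N j (N j - 1) with hMdef
    have hMj : M j = N j - 1 := by simp [hMdef]
    have hNM : N = Function.update M j (M j + 1) := by
      funext i
      rcases eq_or_ne i j with rfl | h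
      · simp [hMdef]; omega
      · simp [hMdef, Function.update_of_ne h]
    have hsumM : ∑ i, M i = n := by
      rw [hMdef, Finset.sum_update_of_mem (Finset.mem_univ j), Finset.sdiff_singleton_eq_erase]
      rw [← Finset.sum_erase_add _ _ (Finset.mem_univ j)] at hs
      omega
    have hmult : ((N j : ℝ)) * (Nat.multinomial univ N : ℝ)
        = ((n:ℝ) + 1) * (Nat.multinomial univ M : ℝ) := by
      have := mult_succ k j M
      rw [hsumM] at this
      rw [hNM, Function.update_self]
      exact_mod_cast congrArg (fun x : ℕ => (x:ℝ)) (by rw [this])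
    have hprod : (∏ i, P i ^ N i) = P j * ∏ i, P i ^ M i := by
      rw [hNM]
      have : (fun i => P i ^ (Function.update M j (M j + 1) i))
          = Function.update (fun i => P i ^ M i) j (P j ^ (M j + 1)) := by
        funext i
        rcases eq_or_ne i j with rfl | h
        · simp
        · simp [Function.update_of_ne h]
      rw [this, Finset.prod_update_of_mem (Finset.mem_univ j), Finset.sdiff_singleton_eq_erase,
        ← Finset.prod_erase_mul univ (fun i => P i ^ M i) (Finset.mem_univ j), pow_succ]
      ring
    have hFj : N j = M j + 1 := by rw [hNM, Function.update_self]
    rw [hprod, hFj]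
    push_cast at hmult ⊢
    rw [hFj] at hmult
    push_cast at hmult
    linear_combination (P j * (∏ i, P i ^ M i) * F (M j + 1)) * hmult

theorem T0 (k : ℕ) (P : Fin k → ℝ) (hP : ∑ i, P i = 1) (n : ℕ) :
    ∑ N ∈ piAntidiag (univ : Finset (Fin k)) n,
      (Nat.multinomial univ N : ℝ) * ∏ i, P i ^ N i = 1 := by
  classical
  have h := Finset.sum_pow_eq_sum_piAntidiag (univ : Finset (Fin k)) P n
  rw [hP, one_pow] at h
  exact h.symm

theorem T1 (k : ℕ) (P : Fin k → ℝ) (hP : ∑ i, P i = 1) (j : Fin k) (n : ℕ) :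
    ∑ N ∈ piAntidiag (univ : Finset (Fin k)) n,
      (Nat.multinomial univ N : ℝ) * (∏ i, P i ^ N i) * (N j : ℝ) = (n : ℝ) * P j := by
  classical
  cases n with
  | zero => simp
  | succ m =>
    have h := master k P j m (fun _ => 1)
    simp only [mul_one] at h
    rw [h, T0 k P hP m]
    push_cast
    ring

theorem T2 (k : ℕ) (P : Fin k → ℝ) (hP : ∑ i, P i = 1) (j : Fin k) (n : ℕ) :
    ∑ N ∈ piAntidiag (univ : Finset (Fin k)) n,
      (Nat.multinomial univ N : ℝ) * (∏ i, P i ^ N i) * ((N j : ℝ) * ((N j : ℝ) - 1))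
      = (n : ℝ) * ((n : ℝ) - 1) * P j ^ 2 := by
  classical
  cases n with
  | zero =>
    rw [piAntidiag_zero]
    simp
  | succ m =>
    have h := master k P j m (fun s => (s : ℝ) - 1)
    rw [h]
    have h2 : ∑ M ∈ piAntidiag (univ : Finset (Fin k)) m,
        (Nat.multinomial univ M : ℝ) * (∏ i, P i ^ M i) * (((M j + 1 : ℕ) : ℝ) - 1)
        = (m : ℝ) * P j := by
      rw [← T1 k P hP j m]
      apply Finset.sum_congr rfl
      intro N _
      push_cast
      ring
    rw [h2]
    push_cast
    ring

theorem moment2 (k : ℕ) (P : Fin k → ℝ) (hP : ∑ i, P i = 1) (j : Fin k) (n : ℕ)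
    (hn : (n : ℝ) ≠ 0) :
    ∑ N ∈ piAntidiag (univ : Finset (Fin k)) n,
      (Nat.multinomial univ N : ℝ) * (∏ i, P i ^ N i) * ((N j : ℝ) / n - P j) ^ 2
      = P j * (1 - P j) / n := by
  classical
  have expand : ∀ N : Fin k → ℕ,
      (Nat.multinomial univ N : ℝ) * (∏ i, P i ^ N i) * ((N j : ℝ) / n - P j) ^ 2
      = (1 / (n:ℝ)^2) * ((Nat.multinomial univ N : ℝ) * (∏ i, P i ^ N i) * ((N j : ℝ) * ((N j : ℝ) - 1)))
        + (1 / (n:ℝ)^2 - 2 * P j / n) * ((Nat.multinomial univ N : ℝ) * (∏ i, P i ^ N i) * (N j : ℝ))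
        + P j ^ 2 * ((Nat.multinomial univ N : ℝ) * ∏ i, P i ^ N i) := by
    intro N
    field_simp
    ring
  calc ∑ N ∈ piAntidiag (univ : Finset (Fin k)) n,
      (Nat.multinomial univ N : ℝ) * (∏ i, P i ^ N i) * ((N j : ℝ) / n - P j) ^ 2
      = (1 / (n:ℝ)^2) * ((n : ℝ) * ((n : ℝ) - 1) * P j ^ 2)
        + (1 / (n:ℝ)^2 - 2 * P j / n) * ((n : ℝ) * P j) + P j ^ 2 * 1 := by
        simp_rw [expand]
        rw [Finset.sum_add_distrib, Finset.sum_add_distrib, ← Finset.mul_sum, ← Finset.mul_sum,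
          ← Finset.mul_sum, T0 k P hP, T1 k P hP, T2 k P hP]
    _ = P j * (1 - P j) / n := by field_simp; ring

theorem mExp_eq' (n : ℕ) {k : ℕ} (P : Fin k → ℝ) (f : (Fin k → ℕ) → ℝ) :
    mExp n P f
    = ∑ N ∈ piAntidiag (univ : Finset (Fin k)) n,
        ((Nat.multinomial univ N : ℝ) * ∏ i, P i ^ N i) * f N := by
  classical
  rw [mExp, tsum_eq_sum (s := piAntidiag (univ : Finset (Fin k)) n) ?_]
  · apply Finset.sum_congr rfl
    intro N hN
    rw [mem_piAntidiag] at hN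
    have hs : (∑ i, N i) = n := hN.1
    rw [mWeight, if_pos hs]
    congr 2
    have hspec := Nat.multinomial_spec (univ : Finset (Fin k)) N
    rw [hs] at hspec
    have hprodne : (∏ i, ((N i).factorial : ℝ)) ≠ 0 := by
      apply Finset.prod_ne_zero_iff.mpr
      intro i _
      exact_mod_cast (N i).factorial_ne_zero
    rw [div_eq_iff hprodne, ← Nat.cast_prod, ← Nat.cast_mul, mul_comm]
    exact_mod_cast (congrArg (fun x : ℕ => (x : ℝ)) hspec).symm
  · intro N hN
    simp only [mem_piAntidiag, mem_univ, implies_true, and_true] at hN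
    rw [mWeight, if_neg hN, zero_mul]

theorem taylor_one_side (φ : ℝ → ℝ) (hdiff : Differentiable ℝ φ) (K : ℝ)
    (hL : ∀ x ∈ Set.Icc (0:ℝ) 1, ∀ y ∈ Set.Icc (0:ℝ) 1,
      |deriv φ x - deriv φ y| ≤ K * |x - y|)
    (p x : ℝ) (hp : p ∈ Set.Icc (0:ℝ) 1) (hx : x ∈ Set.Icc (0:ℝ) 1) :
    φ x - φ p - deriv φ p * (x - p) ≤ K / 2 * (x - p) ^ 2 := by
  set g : ℝ → ℝ := fun t => φ t - φ p - deriv φ p * (t - p) - K/2 * (t-p)^2 with hg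
  have hgd : ∀ t, HasDerivAt g (deriv φ t - deriv φ p - K * (t - p)) t := by
    intro t
    have hc : HasDerivAt (fun t : ℝ => t - p) 1 t := (hasDerivAt_id t).sub_const p
    have h1 : HasDerivAt φ (deriv φ t) t := (hdiff t).hasDerivAt
    have h2 : HasDerivAt (fun t => deriv φ p * (t - p)) (deriv φ p * 1) t := hc.const_mul _
    have h3 : HasDerivAt (fun t => K/2 * (t-p)^2) (K/2 * (2 * (t - p) ^ 1 * 1)) t :=
      (hc.pow 2).const_mul _
    have := ((h1.sub_const (φ p)).sub h2).sub h3
    exact this.congr_deriv (by ring)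
  have hgp : g p = 0 := by simp [hg]
  have key : g x ≤ g p := by
    rcases le_total p x with hpx | hxp
    · have hanti : AntitoneOn g (Set.Icc p x) := by
        apply antitoneOn_of_deriv_nonpos (convex_Icc p x)
        · intro t _
          exact (hgd t).differentiableAt.continuousAt.continuousWithinAt
        · intro t ht
          exact ((hgd t).differentiableAt).differentiableWithinAt
        · intro t ht
          rw [interior_Icc] at ht
          rw [(hgd t).deriv]
          have htm : t ∈ Set.Icc (0:ℝ) 1 := ⟨le_trans hp.1 ht.1.le, le_trans ht.2.le hx.2⟩
          have h1 := hL t htm p hp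
          have h2 : deriv φ t - deriv φ p ≤ |deriv φ t - deriv φ p| := le_abs_self _
          have h3 : |t - p| = t - p := abs_of_nonneg (by linarith [ht.1])
          rw [h3] at h1
          linarith
      exact hanti (Set.left_mem_Icc.mpr hpx) (Set.right_mem_Icc.mpr hpx) hpx
    · have hmono : MonotoneOn g (Set.Icc x p) := by
        apply monotoneOn_of_deriv_nonneg (convex_Icc x p)
        · intro t _
          exact (hgd t).differentiableAt.continuousAt.continuousWithinAt
        · intro t ht
          exact ((hgd t).differentiableAt).differentiableWithinAt
        · intro t ht
          rw [interior_Icc] at ht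
          rw [(hgd t).deriv]
          have htm : t ∈ Set.Icc (0:ℝ) 1 := ⟨le_trans hx.1 ht.1.le, le_trans ht.2.le hp.2⟩
          have h1 := hL t htm p hp
          have h2 : -|deriv φ t - deriv φ p| ≤ deriv φ t - deriv φ p := neg_abs_le _
          have h3 : |t - p| = -(t - p) := abs_of_nonpos (by linarith [ht.2])
          rw [h3] at h1
          linarith
      exact hmono (Set.left_mem_Icc.mpr hxp) (Set.right_mem_Icc.mpr hxp) hxp
  rw [hgp] at key
  simp only [hg] at key
  linarith

theorem taylor_abs (φ : ℝ → ℝ) (hdiff : Differentiable ℝ φ) (K : ℝ)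
    (hL : ∀ x ∈ Set.Icc (0:ℝ) 1, ∀ y ∈ Set.Icc (0:ℝ) 1,
      |deriv φ x - deriv φ y| ≤ K * |x - y|)
    (p x : ℝ) (hp : p ∈ Set.Icc (0:ℝ) 1) (hx : x ∈ Set.Icc (0:ℝ) 1) :
    |φ x - φ p - deriv φ p * (x - p)| ≤ K / 2 * (x - p) ^ 2 := by
  have hup := taylor_one_side φ hdiff K hL p x hp hx
  have hdneg : deriv (fun t => -φ t) = fun t => -deriv φ t := by
    funext t
    exact deriv.neg
  have hdn := taylor_one_side (fun t => -φ t) hdiff.neg K (by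
    intro a ha b hb
    rw [hdneg]
    simp only
    rw [show -deriv φ a - -deriv φ b = -(deriv φ a - deriv φ b) by ring, abs_neg]
    exact hL a ha b hb) p x hp hx
  rw [hdneg] at hdn
  simp only at hdn
  rw [abs_le]
  constructor <;> linarith

theorem per_coord (k : ℕ) (P : Fin k → ℝ) (h0 : ∀ i, 0 ≤ P i) (h1 : ∑ i, P i = 1)
    (φ : ℝ → ℝ) (hdiff : Differentiable ℝ φ) (K : ℝ)
    (hL : ∀ x ∈ Set.Icc (0:ℝ) 1, ∀ y ∈ Set.Icc (0:ℝ) 1,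
      |deriv φ x - deriv φ y| ≤ K * |x - y|)
    (n : ℕ) (hn : 1 ≤ n) (j : Fin k) :
    |(∑ N ∈ piAntidiag (univ : Finset (Fin k)) n,
        ((Nat.multinomial univ N : ℝ) * ∏ i, P i ^ N i) * φ ((N j : ℝ) / n)) - φ (P j)|
      ≤ K / 2 * (P j * (1 - P j) / n) := by
  classical
  have hnR : (0:ℝ) < n := by exact_mod_cast hn
  have hW0 : ∀ N : Fin k → ℕ, 0 ≤ (Nat.multinomial univ N : ℝ) * ∏ i, P i ^ N i :=
    fun N => mul_nonneg (Nat.cast_nonneg _) (Finset.prod_nonneg fun i _ => pow_nonneg (h0 i) _)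
  have hPj : P j ∈ Set.Icc (0:ℝ) 1 :=
    ⟨h0 j, by rw [← h1]; exact Finset.single_le_sum (fun i _ => h0 i) (mem_univ j)⟩
  have hxm : ∀ N ∈ piAntidiag (univ : Finset (Fin k)) n, ((N j : ℝ) / n) ∈ Set.Icc (0:ℝ) 1 := by
    intro N hN
    rw [mem_piAntidiag] at hN
    refine ⟨div_nonneg (Nat.cast_nonneg _) hnR.le, ?_⟩
    rw [div_le_one hnR]
    exact_mod_cast le_trans (Finset.single_le_sum (f := fun i => N i) (fun i _ => Nat.zero_le _)
      (mem_univ j)) (le_of_eq hN.1)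
  have hkey : (∑ N ∈ piAntidiag (univ : Finset (Fin k)) n,
        ((Nat.multinomial univ N : ℝ) * ∏ i, P i ^ N i) * φ ((N j : ℝ) / n)) - φ (P j)
      = ∑ N ∈ piAntidiag (univ : Finset (Fin k)) n,
          ((Nat.multinomial univ N : ℝ) * ∏ i, P i ^ N i) *
            (φ ((N j : ℝ) / n) - φ (P j) - deriv φ (P j) * ((N j : ℝ) / n - P j)) := by
    have hexp : ∀ N : Fin k → ℕ,
        ((Nat.multinomial univ N : ℝ) * ∏ i, P i ^ N i) *
          (φ ((N j : ℝ) / n) - φ (P j) - deriv φ (P j) * ((N j : ℝ) / n - P j))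
        = ((Nat.multinomial univ N : ℝ) * ∏ i, P i ^ N i) * φ ((N j : ℝ) / n)
          - φ (P j) * ((Nat.multinomial univ N : ℝ) * ∏ i, P i ^ N i)
          - (deriv φ (P j) / n) *
              ((Nat.multinomial univ N : ℝ) * (∏ i, P i ^ N i) * (N j : ℝ))
          + (deriv φ (P j) * P j) * ((Nat.multinomial univ N : ℝ) * ∏ i, P i ^ N i) := by
      intro N
      field_simp
      ring
    simp_rw [hexp]
    rw [Finset.sum_add_distrib, Finset.sum_sub_distrib, Finset.sum_sub_distrib,
      ← Finset.mul_sum, ← Finset.mul_sum, ← Finset.mul_sum, T0 k P h1, T1 k P h1]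
    field_simp
    ring
  rw [hkey]
  calc |∑ N ∈ piAntidiag (univ : Finset (Fin k)) n,
          ((Nat.multinomial univ N : ℝ) * ∏ i, P i ^ N i) *
            (φ ((N j : ℝ) / n) - φ (P j) - deriv φ (P j) * ((N j : ℝ) / n - P j))|
      ≤ ∑ N ∈ piAntidiag (univ : Finset (Fin k)) n,
          |((Nat.multinomial univ N : ℝ) * ∏ i, P i ^ N i) *
            (φ ((N j : ℝ) / n) - φ (P j) - deriv φ (P j) * ((N j : ℝ) / n - P j))| :=
        Finset.abs_sum_le_sum_abs _ _
    _ ≤ ∑ N ∈ piAntidiag (univ : Finset (Fin k)) n,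
          ((Nat.multinomial univ N : ℝ) * ∏ i, P i ^ N i) *
            (K / 2 * ((N j : ℝ) / n - P j) ^ 2) := by
        apply Finset.sum_le_sum
        intro N hN
        rw [abs_mul, abs_of_nonneg (hW0 N)]
        exact mul_le_mul_of_nonneg_left
          (taylor_abs φ hdiff K hL (P j) ((N j : ℝ) / n) hPj (hxm N hN)) (hW0 N)
    _ = K / 2 * ∑ N ∈ piAntidiag (univ : Finset (Fin k)) n,
          ((Nat.multinomial univ N : ℝ) * ∏ i, P i ^ N i) * ((N j : ℝ) / n - P j) ^ 2 := by
        rw [Finset.mul_sum]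
        apply Finset.sum_congr rfl
        intro N _
        ring
    _ = K / 2 * (P j * (1 - P j) / n) := by rw [moment2 k P h1 j n hnR.ne']

end Helpers

/-- bias of the plugin estimator when `φ'` is Lipschitz. -/
theorem bias_plugin_lipschitz_deriv
    (φ : ℝ → ℝ) (hdiff : Differentiable ℝ φ)
    (hLip : ∃ K : ℝ, 0 ≤ K ∧ ∀ x ∈ Set.Icc (0:ℝ) 1, ∀ y ∈ Set.Icc (0:ℝ) 1,
        |deriv φ x - deriv φ y| ≤ K * |x - y| ^ (1 : ℝ)) :
    ∀ (n k : ℕ), 1 ≤ n → 1 ≤ k → ∀ P : Fin k → ℝ, P ∈ probVec k →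
      |mExp n P (fun N => ∑ i, φ ((N i : ℝ) / (n : ℝ))) - ∑ i, φ (P i)|
        ≤ holderNorm 1 (deriv φ) / (2 * (n : ℝ)) := by
  classical
  intro n k hn hk P hPmem
  obtain ⟨h0, h1⟩ := hPmem
  have hnR : (0:ℝ) < n := by exact_mod_cast hn
  have h2n : (0:ℝ) < 2 * n := by linarith
  have hmain : ∀ K : ℝ, 0 ≤ K →
      (∀ x ∈ Set.Icc (0:ℝ) 1, ∀ y ∈ Set.Icc (0:ℝ) 1,
        |deriv φ x - deriv φ y| ≤ K * |x - y| ^ (1:ℝ)) →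
      |mExp n P (fun N => ∑ i, φ ((N i : ℝ) / (n : ℝ))) - ∑ i, φ (P i)|
        ≤ K / (2 * n) := by
    intro K hK0 hKL
    have hL : ∀ x ∈ Set.Icc (0:ℝ) 1, ∀ y ∈ Set.Icc (0:ℝ) 1,
        |deriv φ x - deriv φ y| ≤ K * |x - y| := by
      intro x hx y hy
      have := hKL x hx y hy
      rwa [Real.rpow_one] at this
    rw [mExp_eq' n P (fun N => ∑ i, φ ((N i : ℝ) / (n : ℝ)))]
    have hswap : ∑ N ∈ Finset.piAntidiag (Finset.univ : Finset (Fin k)) n,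
          ((Nat.multinomial Finset.univ N : ℝ) * ∏ i, P i ^ N i) * (∑ i, φ ((N i : ℝ) / n))
        = ∑ i, ∑ N ∈ Finset.piAntidiag (Finset.univ : Finset (Fin k)) n,
            ((Nat.multinomial Finset.univ N : ℝ) * ∏ i, P i ^ N i) * φ ((N i : ℝ) / n) := by
      simp_rw [Finset.mul_sum]
      exact Finset.sum_comm
    rw [hswap, ← Finset.sum_sub_distrib]
    calc |∑ i, ((∑ N ∈ Finset.piAntidiag (Finset.univ : Finset (Fin k)) n,
            ((Nat.multinomial Finset.univ N : ℝ) * ∏ i, P i ^ N i) * φ ((N i : ℝ) / n))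
              - φ (P i))|
        ≤ ∑ i, |(∑ N ∈ Finset.piAntidiag (Finset.univ : Finset (Fin k)) n,
            ((Nat.multinomial Finset.univ N : ℝ) * ∏ i, P i ^ N i) * φ ((N i : ℝ) / n))
              - φ (P i)| := Finset.abs_sum_le_sum_abs _ _
      _ ≤ ∑ i, K / (2 * n) * P i := by
          apply Finset.sum_le_sum
          intro i _
          have hpc := per_coord k P h0 h1 φ hdiff K hL n hn i
          have hPi1 : P i ≤ 1 := by
            rw [← h1]
            exact Finset.single_le_sum (fun i _ => h0 i) (Finset.mem_univ i)
          refine le_trans hpc ?_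
          have hq : P i * (1 - P i) ≤ P i := by nlinarith [h0 i]
          calc K / 2 * (P i * (1 - P i) / n) ≤ K / 2 * (P i / n) := by
                apply mul_le_mul_of_nonneg_left _ (by linarith)
                exact div_le_div_of_nonneg_right hq hnR.le
            _ = K / (2 * n) * P i := by ring
      _ = K / (2 * n) := by rw [← Finset.mul_sum, h1, mul_one]
  have hSne : {K : ℝ | 0 ≤ K ∧
      ∀ x ∈ Set.Icc (0:ℝ) 1, ∀ y ∈ Set.Icc (0:ℝ) 1,
        |deriv φ x - deriv φ y| ≤ K * |x - y| ^ (1:ℝ)}.Nonempty := by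
    obtain ⟨K, hK0, hKL⟩ := hLip
    exact ⟨K, hK0, hKL⟩
  rw [holderNorm]
  rw [le_div_iff₀ h2n]
  apply le_csInf hSne
  intro K hK
  rw [← le_div_iff₀ h2n]
  exact hmain K hK.1 hK.2
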